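/- arXiv:2301.00262 — 2 statements merged into one kernel-verified Lean document; each statement's English description precedes it below -/
import Mathlib

section
/- Let β > 0, k ∈ ℕ, 0 < r < R, and let Y ⊂ ℝ be a finite set with r < |y| ≤ R for every y ∈ Y. Then the function Ψ(x) := −β · Σ_{1 ≤ i < j ≤ k} log(x_j − x_i) − β · Σ_{i=1}^k Σ_{y ∈ Y} log |1 − x_i / y| is convex on the chamber C_r^k := {x ∈ ℝ^k : −r ≤ x_1 < x_2 < ⋯ < x_k ≤ r}. -/
open Real Set

/-- A finite sum of functions convex on `s` is convex on `s`. -/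
private lemma convexOn_finset_sum {E : Type*} [AddCommGroup E] [Module ℝ E]
    {ι : Type*} (t : Finset ι) {s : Set E} (hs : Convex ℝ s)
    (f : ι → E → ℝ) (hf : ∀ i ∈ t, ConvexOn ℝ s (f i)) :
    ConvexOn ℝ s (fun x => ∑ i ∈ t, f i x) := by
  classical
  induction t using Finset.induction_on with
  | empty => simpa using convexOn_const 0 hs
  | insert _ _ hnotmem ih =>
    rename_i a u
    simp only [Finset.sum_insert hnotmem]
    exact (hf a (Finset.mem_insert_self a u)).add
      (ih fun i hi => hf i (Finset.mem_insert_of_mem hi))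

/-- `-log ∘ g` is convex on `s` when `g` is affine and positive on `s`. -/
private lemma convexOn_neg_log_affine {E : Type*} [AddCommGroup E] [Module ℝ E]
    {s : Set E} (hs : Convex ℝ s) (g : E → ℝ)
    (hgaff : ∀ (x y : E) (a b : ℝ), a + b = 1 →
      g (a • x + b • y) = a * g x + b * g y)
    (hgpos : ∀ x ∈ s, 0 < g x)
    (f : E → ℝ) (hf : ∀ x ∈ s, f x = -Real.log (g x)) :
    ConvexOn ℝ s f := by
  refine ⟨hs, fun x hx y hy a b ha hb hab => ?_⟩
  have hmem : a • x + b • y ∈ s := hs hx hy ha hb hab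
  rw [hf _ hmem, hf _ hx, hf _ hy, hgaff x y a b hab]
  have hcon : ConcaveOn ℝ (Set.Ioi 0) Real.log := strictConcaveOn_log_Ioi.concaveOn
  have h2 := hcon.2 (hgpos x hx) (hgpos y hy) ha hb hab
  simp only [smul_eq_mul] at h2 ⊢
  linarith

/-- Chamber formulation of the geodesic convexity of the truncated conditional
Hamiltonian of the sine_β ensemble: for `β > 0`, `0 < r < R` and a finite exterior
configuration `Y ⊆ {y : r < |y| ≤ R}`, the Hamiltonian
`Ψ x = -β ∑_{i<j} log (x j - x i) - β ∑_i ∑_{y ∈ Y} log |1 - x i / y|`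
is convex on the Weyl chamber `{x : -r ≤ x 1 < x 2 < ⋯ < x k ≤ r}`. -/
theorem sineBeta_hamiltonian_convexOn (β : ℝ) (hβ : 0 < β) (k : ℕ)
    (r R : ℝ) (hr : 0 < r) (hrR : r < R)
    (Y : Finset ℝ) (hY : ∀ y ∈ Y, r < |y| ∧ |y| ≤ R) :
    ConvexOn ℝ
      {x : Fin k → ℝ | StrictMono x ∧ ∀ i, x i ∈ Set.Icc (-r) r}
      (fun x : Fin k → ℝ =>
        -β * ∑ p ∈ Finset.univ.filter (fun p : Fin k × Fin k => p.1 < p.2),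
            Real.log (x p.2 - x p.1)
          - β * ∑ i : Fin k, ∑ y ∈ Y, Real.log |1 - x i / y|) := by
  classical
  set S : Set (Fin k → ℝ) :=
    {x : Fin k → ℝ | StrictMono x ∧ ∀ i, x i ∈ Set.Icc (-r) r} with hS
  -- convexity of the chamber
  have hSconv : Convex ℝ S := by
    intro x hx y hy a b ha hb hab
    refine ⟨fun i j hij => ?_, fun i => ?_⟩
    · have h1 : a * x i ≤ a * x j := mul_le_mul_of_nonneg_left (hx.1 hij).le ha
      have h2 : b * y i ≤ b * y j := mul_le_mul_of_nonneg_left (hy.1 hij).le hb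
      rcases lt_or_eq_of_le ha with ha' | ha'
      · have h1' : a * x i < a * x j := by
          exact (mul_lt_mul_iff_right₀ ha').mpr (hx.1 hij)
        simpa [smul_eq_mul] using add_lt_add_of_lt_of_le h1' h2
      · have hb' : 0 < b := by linarith
        have h2' : b * y i < b * y j := (mul_lt_mul_iff_right₀ hb').mpr (hy.1 hij)
        simpa [smul_eq_mul] using add_lt_add_of_le_of_lt h1 h2'
    · obtain ⟨hx1, hx2⟩ := (hx.2 i)
      obtain ⟨hy1, hy2⟩ := (hy.2 i)
      constructor
      · have : a * (-r) + b * (-r) ≤ a * x i + b * y i :=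
          add_le_add (mul_le_mul_of_nonneg_left hx1 ha)
            (mul_le_mul_of_nonneg_left hy1 hb)
        simp only [Pi.add_apply, Pi.smul_apply, smul_eq_mul]
        nlinarith
      · have : a * x i + b * y i ≤ a * r + b * r :=
          add_le_add (mul_le_mul_of_nonneg_left hx2 ha)
            (mul_le_mul_of_nonneg_left hy2 hb)
        simp only [Pi.add_apply, Pi.smul_apply, smul_eq_mul]
        nlinarith
  -- bound on |x i|
  have habs : ∀ x ∈ S, ∀ i, |x i| ≤ r := by
    intro x hx i
    exact abs_le.mpr ⟨(hx.2 i).1, (hx.2 i).2⟩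
  -- convexity of each pair term
  have hpair : ∀ p ∈ Finset.univ.filter (fun p : Fin k × Fin k => p.1 < p.2),
      ConvexOn ℝ S (fun x : Fin k → ℝ => -Real.log (x p.2 - x p.1)) := by
    intro p hp
    have hplt : p.1 < p.2 := (Finset.mem_filter.mp hp).2
    refine convexOn_neg_log_affine hSconv (fun x => x p.2 - x p.1) ?_ ?_ _ (fun x _ => rfl)
    · intro x y a b hab
      simp only [Pi.add_apply, Pi.smul_apply, smul_eq_mul]
      ring
    · intro x hx
      exact sub_pos.mpr (hx.1 hplt)
  -- convexity of each interaction term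
  have hinter : ∀ i : Fin k, ∀ y ∈ Y,
      ConvexOn ℝ S (fun x : Fin k → ℝ => -Real.log |1 - x i / y|) := by
    intro i y hy
    obtain ⟨hy1, _⟩ := hY y hy
    have hy0 : y ≠ 0 := by
      intro h; rw [h] at hy1; simp at hy1; linarith
    have hgpos : ∀ x ∈ S, 0 < 1 - x i / y := by
      intro x hx
      have h1 : |x i / y| < 1 := by
        rw [abs_div]
        rw [div_lt_one (lt_trans hr hy1)]
        exact lt_of_le_of_lt (habs x hx i) hy1
      have := (abs_lt.mp h1).2
      linarith
    refine convexOn_neg_log_affine hSconv (fun x => 1 - x i / y) ?_ hgpos _ ?_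
    · intro x z a b hab
      simp only [Pi.add_apply, Pi.smul_apply, smul_eq_mul]
      field_simp
      linear_combination (-y) * hab
    · intro x hx
      rw [abs_of_pos (hgpos x hx)]
  -- assemble
  have hsum1 : ConvexOn ℝ S (fun x : Fin k → ℝ =>
      ∑ p ∈ Finset.univ.filter (fun p : Fin k × Fin k => p.1 < p.2),
        -Real.log (x p.2 - x p.1)) :=
    convexOn_finset_sum _ hSconv _ hpair
  have hsum2 : ConvexOn ℝ S (fun x : Fin k → ℝ =>
      ∑ i : Fin k, ∑ y ∈ Y, -Real.log |1 - x i / y|) := by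
    refine convexOn_finset_sum _ hSconv _ (fun i _ => ?_)
    exact convexOn_finset_sum _ hSconv _ (fun y hy => hinter i y hy)
  have hfinal := (hsum1.smul hβ.le).add (hsum2.smul hβ.le)
  refine ConvexOn.congr hfinal (fun x _ => ?_)
  simp only [Pi.add_apply, smul_eq_mul, Finset.sum_neg_distrib, mul_neg, neg_mul]
  ring
end

section
/- Let β > 0, s ∈ (0, 1), k ∈ ℕ, 0 < r < R, and let Y ⊂ ℝ be a finite set with r < |y| ≤ R for every y ∈ Y. Then the function Ψ(x) := β · ( Σ_{1 ≤ i < j ≤ k} (x_j − x_i)^{−s} + Σ_{i=1}^k Σ_{y ∈ Y} ( |x_i − y|^{−s} − |y|^{−s} ) ) is convex on the chamber C_r^k := {x ∈ ℝ^k : −r ≤ x_1 < x_2 < ⋯ < x_k ≤ r}. -/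
open Set Real

/-- `t ↦ t ^ (-s)` is convex on `(0, ∞)` for `s > 0`. -/
lemma convexOn_rpow_neg {s : ℝ} (hs : 0 < s) :
    ConvexOn ℝ (Set.Ioi (0 : ℝ)) (fun t : ℝ => t ^ (-s)) := by
  have hf : ConvexOn ℝ (Set.Ioi (0 : ℝ)) (fun t : ℝ => s • (-Real.log t)) :=
    (strictConcaveOn_log_Ioi.concaveOn.neg).smul hs.le
  have himg : (fun t : ℝ => s • (-Real.log t)) '' Set.Ioi 0 = Set.univ := by
    ext z
    simp only [Set.mem_univ, iff_true, Set.mem_image, Set.mem_Ioi]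
    refine ⟨Real.exp (-(z / s)), Real.exp_pos _, ?_⟩
    rw [Real.log_exp, smul_eq_mul]
    field_simp
  have hg : ConvexOn ℝ ((fun t : ℝ => s • (-Real.log t)) '' Set.Ioi 0) Real.exp := by
    rw [himg]; exact convexOn_exp
  have hmono : MonotoneOn Real.exp ((fun t : ℝ => s • (-Real.log t)) '' Set.Ioi 0) :=
    Real.exp_monotone.monotoneOn _
  have hcomp := hg.comp hf hmono
  refine hcomp.congr fun t ht => ?_
  simp only [Function.comp_apply, smul_eq_mul]
  rw [Real.rpow_def_of_pos ht]
  ring_nf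

/-- Chamber formulation of the geodesic convexity of the truncated conditional
Hamiltonian of the β-Riesz gas with kernel `g(x) = |x|^{-s}`, `s ∈ (0,1)`:
`Ψ x = β (∑_{i<j} (x j - x i)^{-s} + ∑_i ∑_{y ∈ Y} (|x i - y|^{-s} - |y|^{-s}))`
is convex on the Weyl chamber `{x : -r ≤ x 1 < x 2 < ⋯ < x k ≤ r}`. -/
theorem riesz_hamiltonian_convexOn (β : ℝ) (hβ : 0 < β)
    (s : ℝ) (hs : s ∈ Set.Ioo (0 : ℝ) 1) (k : ℕ)
    (r R : ℝ) (hr : 0 < r) (hrR : r < R)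
    (Y : Finset ℝ) (hY : ∀ y ∈ Y, r < |y| ∧ |y| ≤ R) :
    ConvexOn ℝ
      {x : Fin k → ℝ | StrictMono x ∧ ∀ i, x i ∈ Set.Icc (-r) r}
      (fun x : Fin k → ℝ =>
        β * ((∑ p ∈ Finset.univ.filter (fun p : Fin k × Fin k => p.1 < p.2),
              (x p.2 - x p.1) ^ (-s))
          + ∑ i : Fin k, ∑ y ∈ Y, (|x i - y| ^ (-s) - |y| ^ (-s)))) := by
  obtain ⟨hs0, hs1⟩ := hs
  have hbase := convexOn_rpow_neg hs0
  -- convexity of the chamber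
  have hSconv : Convex ℝ {x : Fin k → ℝ | StrictMono x ∧ ∀ i, x i ∈ Set.Icc (-r) r} := by
    intro x hx w hw a b ha hb hab
    refine ⟨?_, fun i => ?_⟩
    · intro i j hij
      simp only [Pi.add_apply, Pi.smul_apply, smul_eq_mul]
      rcases ha.lt_or_eq with ha' | ha'
      · have h1 : a * x i < a * x j := by nlinarith [hx.1 hij]
        have h2 : b * w i ≤ b * w j := by nlinarith [(hw.1 hij).le]
        linarith
      · have hb1 : b = 1 := by linarith
        have h2 : w i < w j := hw.1 hij
        rw [← ha', hb1]; simpa using h2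
    · have h1 := hx.2 i
      have h2 := hw.2 i
      simp only [Set.mem_Icc] at h1 h2 ⊢
      simp only [Pi.add_apply, Pi.smul_apply, smul_eq_mul]
      constructor <;> nlinarith [h1.1, h1.2, h2.1, h2.2]
  refine ⟨hSconv, ?_⟩
  intro x hx w hw a b ha hb hab
  simp only [smul_eq_mul, Pi.add_apply, Pi.smul_apply]
  set S1 : (Fin k → ℝ) → ℝ := fun x =>
    ∑ p ∈ Finset.univ.filter (fun p : Fin k × Fin k => p.1 < p.2), (x p.2 - x p.1) ^ (-s) with hS1
  set S2 : (Fin k → ℝ) → ℝ := fun x =>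
    ∑ i : Fin k, ∑ y ∈ Y, (|x i - y| ^ (-s) - |y| ^ (-s)) with hS2
  have key1 : S1 (a • x + b • w) ≤ a * S1 x + b * S1 w := by
    rw [hS1]
    simp only
    rw [Finset.mul_sum, Finset.mul_sum, ← Finset.sum_add_distrib]
    refine Finset.sum_le_sum fun p hp => ?_
    have hplt : p.1 < p.2 := (Finset.mem_filter.1 hp).2
    have hxd : x p.2 - x p.1 ∈ Set.Ioi (0 : ℝ) := by
      simp only [Set.mem_Ioi, sub_pos]; exact hx.1 hplt
    have hwd : w p.2 - w p.1 ∈ Set.Ioi (0 : ℝ) := by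
      simp only [Set.mem_Ioi, sub_pos]; exact hw.1 hplt
    have h := hbase.2 hxd hwd ha hb hab
    simp only [smul_eq_mul] at h
    have harg : (a • x + b • w) p.2 - (a • x + b • w) p.1
        = a * (x p.2 - x p.1) + b * (w p.2 - w p.1) := by
      simp only [Pi.add_apply, Pi.smul_apply, smul_eq_mul]; ring
    rw [harg]; exact h
  have key2 : S2 (a • x + b • w) ≤ a * S2 x + b * S2 w := by
    rw [hS2]
    simp only
    rw [Finset.mul_sum, Finset.mul_sum, ← Finset.sum_add_distrib]
    refine Finset.sum_le_sum fun i _ => ?_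
    rw [Finset.mul_sum, Finset.mul_sum, ← Finset.sum_add_distrib]
    refine Finset.sum_le_sum fun y hy => ?_
    obtain ⟨hry, _⟩ := hY y hy
    have hxi := hx.2 i
    have hwi := hw.2 i
    simp only [Set.mem_Icc] at hxi hwi
    have hzi : (a • x + b • w) i = a * x i + b * w i := by
      simp only [Pi.add_apply, Pi.smul_apply, smul_eq_mul]
    have hc : a * |y| ^ (-s) + b * |y| ^ (-s) = |y| ^ (-s) := by
      rw [← add_mul, hab, one_mul]
    have main : |(a • x + b • w) i - y| ^ (-s)
        ≤ a * |x i - y| ^ (-s) + b * |w i - y| ^ (-s) := by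
      rw [hzi]
      rcases lt_abs.1 hry with hyr | hyr
      · -- y > r : all particles lie strictly below y
        have hx' : x i < y := lt_of_le_of_lt hxi.2 hyr
        have hw' : w i < y := lt_of_le_of_lt hwi.2 hyr
        have e1 : |x i - y| = y - x i := by rw [abs_sub_comm, abs_of_pos (by linarith)]
        have e2 : |w i - y| = y - w i := by rw [abs_sub_comm, abs_of_pos (by linarith)]
        have e3 : |a * x i + b * w i - y| = a * (y - x i) + b * (y - w i) := by
          rw [abs_sub_comm, abs_of_pos (by nlinarith)]
          linear_combination (-y) * hab
        rw [e1, e2, e3]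
        have h := hbase.2 (Set.mem_Ioi.2 (by linarith : (0:ℝ) < y - x i))
          (Set.mem_Ioi.2 (by linarith : (0:ℝ) < y - w i)) ha hb hab
        simpa only [smul_eq_mul] using h
      · -- y < -r : all particles lie strictly above y
        have hy' : y < -r := by linarith
        have hx' : y < x i := lt_of_lt_of_le hy' hxi.1
        have hw' : y < w i := lt_of_lt_of_le hy' hwi.1
        have e1 : |x i - y| = x i - y := abs_of_pos (by linarith)
        have e2 : |w i - y| = w i - y := abs_of_pos (by linarith)
        have e3 : |a * x i + b * w i - y| = a * (x i - y) + b * (w i - y) := by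
          rw [abs_of_pos (by nlinarith)]
          linear_combination y * hab
        rw [e1, e2, e3]
        have h := hbase.2 (Set.mem_Ioi.2 (by linarith : (0:ℝ) < x i - y))
          (Set.mem_Ioi.2 (by linarith : (0:ℝ) < w i - y)) ha hb hab
        simpa only [smul_eq_mul] using h
    linarith
  have hrw : a * (β * (S1 x + S2 x)) + b * (β * (S1 w + S2 w))
      = β * ((a * S1 x + b * S1 w) + (a * S2 x + b * S2 w)) := by ring
  calc β * (S1 (a • x + b • w) + S2 (a • x + b • w))
      ≤ β * ((a * S1 x + b * S1 w) + (a * S2 x + b * S2 w)) := by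
        apply mul_le_mul_of_nonneg_left (by linarith) hβ.le
    _ = a * (β * (S1 x + S2 x)) + b * (β * (S1 w + S2 w)) := by ring
end
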